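/- Let A ⊆ B(H) be an operator algebra with contractive approximate identity, M ⊆ B(H,K) a σ-TRO with M* M A ⊆ A, and Y = closed span of M A. For each n ∈ ℕ define Φ_n : Y → C_n(A), Φ_n(y) = (m_1* y, …, m_n* y)^T and Ψ_n : C_n(A) → Y, Ψ_n(a_1,…,a_n) = ∑_{i≤n} m_i a_i, where (m_i) is a σ-TRO sequence with ∑ m_i m_i* m = m and partial sums of norm ≤ 1. Then Ψ_n ∘ Φ_n → Id_Y strongly on Y, and for each fixed r, ‖Φ_r ∘ Ψ_n ∘ Φ_n − Φ_r‖ → 0 as n → ∞. -/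

import Mathlib

open Filter Topology ContinuousLinearMap

/-- The norm-closed linear span of a set of operators. -/
noncomputable def clspan {H K : Type*} [NormedAddCommGroup H] [InnerProductSpace ℂ H]
    [NormedAddCommGroup K] [InnerProductSpace ℂ K] (S : Set (H →L[ℂ] K)) : Set (H →L[ℂ] K) :=
  closure ((Submodule.span ℂ S : Submodule ℂ (H →L[ℂ] K)) : Set (H →L[ℂ] K))

/-- A column of `r` operators `H → H`, viewed as one operator `H → ℓ²(Fin r; H)`.  This
realizes elements of the column space `C_r(A)` over an operator algebra `A ⊆ B(H)`. -/
noncomputable def colMap {H : Type*} [NormedAddCommGroup H] [InnerProductSpace ℂ H]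
    (r : ℕ) (b : Fin r → (H →L[ℂ] H)) : H →L[ℂ] (PiLp 2 (fun _ : Fin r => H)) :=
  ((PiLp.continuousLinearEquiv 2 ℂ (fun _ : Fin r => H)).symm :
      (∀ _ : Fin r, H) →L[ℂ] PiLp 2 (fun _ : Fin r => H)) ∘L ContinuousLinearMap.pi b

lemma colMap_norm_le {H : Type*} [NormedAddCommGroup H] [InnerProductSpace ℂ H]
    (r : ℕ) (b : Fin r → (H →L[ℂ] H)) : ‖colMap r b‖ ≤ ∑ i, ‖b i‖ := by
  refine ContinuousLinearMap.opNorm_le_bound _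
    (Finset.sum_nonneg fun i _ => norm_nonneg _) fun ξ => ?_
  have h1 : ‖colMap r b ξ‖ = Real.sqrt (∑ i, ‖b i ξ‖ ^ 2) := by
    rw [colMap, ContinuousLinearMap.comp_apply, PiLp.norm_eq_of_L2]
    rfl
  rw [h1]
  have h2 : ∑ i, ‖b i ξ‖ ^ 2 ≤ (∑ i, ‖b i ξ‖) ^ 2 := by
    rw [sq (∑ i, ‖b i ξ‖), Finset.sum_mul_sum]
    calc ∑ i, ‖b i ξ‖ ^ 2 = ∑ i, ‖b i ξ‖ * ‖b i ξ‖ := by simp [sq]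
    _ ≤ ∑ i, ∑ j, ‖b i ξ‖ * ‖b j ξ‖ := by
        refine Finset.sum_le_sum fun i _ => ?_
        exact Finset.single_le_sum (f := fun j => ‖b i ξ‖ * ‖b j ξ‖)
          (fun j _ => mul_nonneg (norm_nonneg _) (norm_nonneg _)) (Finset.mem_univ i)
  calc Real.sqrt (∑ i, ‖b i ξ‖ ^ 2) ≤ Real.sqrt ((∑ i, ‖b i ξ‖) ^ 2) := Real.sqrt_le_sqrt h2
  _ = ∑ i, ‖b i ξ‖ := Real.sqrt_sq (Finset.sum_nonneg fun i _ => norm_nonneg _)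
  _ ≤ ∑ i, ‖b i‖ * ‖ξ‖ := Finset.sum_le_sum fun i _ => (b i).le_opNorm ξ
  _ = (∑ i, ‖b i‖) * ‖ξ‖ := by rw [Finset.sum_mul]

set_option maxHeartbeats 1000000 in
/-- With `A ⊆ B(H)` an approximately unital operator algebra, `M` a σ-TRO with
`M* M A ⊆ A`, `Y = clspan (M A)`, and `(m i)` a σ-TRO sequence, the maps
`Φ_n(y) = (m₁* y, …, m_n* y)ᵗ` and `Ψ_n(a₁,…,a_n) = ∑ mᵢ aᵢ` satisfy: `Ψ_n ∘ Φ_n → Id_Y`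
strongly on `Y`, and for each fixed `r`, `‖Φ_r ∘ Ψ_n ∘ Φ_n − Φ_r‖ → 0` as `n → ∞`
(the operator norm over `Y`). -/
theorem stmt_13 {H K : Type*} [NormedAddCommGroup H] [InnerProductSpace ℂ H] [CompleteSpace H]
    [NormedAddCommGroup K] [InnerProductSpace ℂ K] [CompleteSpace K]
    (A : Submodule ℂ (H →L[ℂ] H)) (M : Submodule ℂ (H →L[ℂ] K))
    (hAc : IsClosed (A : Set (H →L[ℂ] H))) (hAm : ∀ x ∈ A, ∀ y ∈ A, x ∘L y ∈ A)
    {ι : Type*} [Preorder ι] [IsDirected ι (· ≤ ·)] [Nonempty ι]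
    (e : ι → (H →L[ℂ] H)) (he : ∀ i, e i ∈ A) (hen : ∀ i, ‖e i‖ ≤ 1)
    (heL : ∀ x ∈ A, Tendsto (fun i => e i ∘L x) atTop (𝓝 x))
    (heR : ∀ x ∈ A, Tendsto (fun i => x ∘L e i) atTop (𝓝 x))
    (hMc : IsClosed (M : Set (H →L[ℂ] K)))
    (hMtro : ∀ x ∈ M, ∀ y ∈ M, ∀ z ∈ M, x ∘L (adjoint y ∘L z) ∈ M)
    (hMMA : ∀ x ∈ M, ∀ y ∈ M, ∀ a ∈ A, adjoint x ∘L (y ∘L a) ∈ A)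
    (m : ℕ → (H →L[ℂ] K)) (hm : ∀ i, m i ∈ M)
    (hmn : ∀ n, ‖∑ i ∈ Finset.range n, m i ∘L adjoint (m i)‖ ≤ 1)
    (hms : ∀ x ∈ M, Tendsto (fun n => ∑ i ∈ Finset.range n, (m i ∘L adjoint (m i)) ∘L x)
      atTop (𝓝 x))
    (Y : Set (H →L[ℂ] K))
    (hY : Y = clspan {x : H →L[ℂ] K | ∃ m' ∈ M, ∃ a ∈ A, x = m' ∘L a}) :
    -- (1) Ψ_n ∘ Φ_n → Id_Y strongly on Y
    (∀ y ∈ Y, Tendsto (fun n => ∑ i ∈ Finset.range n, (m i ∘L adjoint (m i)) ∘L y)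
      atTop (𝓝 y)) ∧
    -- (2) for each fixed r, ‖Φ_r ∘ Ψ_n ∘ Φ_n − Φ_r‖ → 0 in the operator norm over Y,
    -- where (Φ_r ∘ Ψ_n ∘ Φ_n − Φ_r)(y) is the column (mᵢ* (s_n y − y))_{i < r} and
    -- s_n = ∑_{j<n} m_j m_j*
    (∀ r : ℕ, ∀ ε > (0 : ℝ), ∃ N : ℕ, ∀ n ≥ N, ∀ y ∈ Y,
      ‖colMap r (fun i : Fin r => adjoint (m i) ∘L
        ((∑ j ∈ Finset.range n, (m j ∘L adjoint (m j)) ∘L y) - y))‖ ≤ ε * ‖y‖) := by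
  set s : ℕ → (K →L[ℂ] K) := fun n => ∑ i ∈ Finset.range n, m i ∘L adjoint (m i) with hs
  have hsum : ∀ (n : ℕ) (y : H →L[ℂ] K),
      (∑ i ∈ Finset.range n, (m i ∘L adjoint (m i)) ∘L y) = s n ∘L y := fun n y =>
    (ContinuousLinearMap.finset_sum_comp _ _).symm
  have hsn : ∀ n, ‖s n‖ ≤ 1 := hmn
  have hsa : ∀ n, adjoint (s n) = s n := by
    intro n
    rw [hs]
    simp only [map_sum]
    exact Finset.sum_congr rfl fun i _ => by rw [adjoint_comp, adjoint_adjoint]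
  -- convergence on M, and the adjoint version
  have hconv : ∀ x ∈ M, Tendsto (fun n => s n ∘L x) atTop (𝓝 x) := by
    intro x hx
    simpa only [hsum] using hms x hx
  have key : ∀ i : ℕ, Tendsto (fun n => ‖adjoint (m i) ∘L s n - adjoint (m i)‖) atTop (𝓝 0) := by
    intro i
    have h2 : Tendsto (fun n => ‖s n ∘L m i - m i‖) atTop (𝓝 0) :=
      (tendsto_iff_norm_sub_tendsto_zero (E := H →L[ℂ] K)).mp (hconv (m i) (hm i))
    refine h2.congr fun n => ?_
    have : adjoint (s n ∘L m i - m i) = adjoint (m i) ∘L s n - adjoint (m i) := by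
      rw [map_sub, adjoint_comp, hsa]
    rw [← this]
    exact (LinearIsometryEquiv.norm_map (ContinuousLinearMap.adjoint (𝕜 := ℂ) (E := H) (F := K)) _).symm
  -- Part 1
  have part1 : ∀ y ∈ Y, Tendsto (fun n => s n ∘L y) atTop (𝓝 y) := by
    intro y hy
    rw [hY] at hy
    have hspan : ∀ z ∈ Submodule.span ℂ {x : H →L[ℂ] K | ∃ m' ∈ M, ∃ a ∈ A, x = m' ∘L a},
        Tendsto (fun n => s n ∘L z) atTop (𝓝 z) := by
      intro z hz
      induction hz using Submodule.span_induction with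
      | mem x hx =>
        obtain ⟨m', hm', a, ha, rfl⟩ := hx
        have h1 : Tendsto (fun n => s n ∘L m') atTop (𝓝 m') := hconv m' hm'
        have hcomp : Continuous fun T : H →L[ℂ] K => T ∘L a :=
          ((ContinuousLinearMap.compL ℂ H H K).flip a).continuous
        have h2 : Tendsto (fun n => (s n ∘L m') ∘L a) atTop (𝓝 (m' ∘L a)) :=
          (hcomp.tendsto m').comp h1
        simpa only [ContinuousLinearMap.comp_assoc] using h2
      | zero => simpa using tendsto_const_nhds (α := ℕ) (a := (0 : H →L[ℂ] K))
      | add x z hx hz ihx ihz => simpa [ContinuousLinearMap.comp_add] using ihx.add ihz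
      | smul c x hx ih => simpa [ContinuousLinearMap.comp_smul] using ih.const_smul c
    rw [Metric.tendsto_atTop]
    intro ε hε
    obtain ⟨z, hzmem, hzd⟩ := Metric.mem_closure_iff.mp hy (ε / 3) (by linarith)
    obtain ⟨N, hN⟩ := Metric.tendsto_atTop.mp (hspan z hzmem) (ε / 3) (by linarith)
    refine ⟨N, fun n hn => ?_⟩
    have h1 : ‖s n ∘L (y - z)‖ ≤ ‖y - z‖ := by
      calc ‖s n ∘L (y - z)‖ ≤ ‖s n‖ * ‖y - z‖ := ContinuousLinearMap.opNorm_comp_le _ _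
      _ ≤ 1 * ‖y - z‖ := by
          exact mul_le_mul_of_nonneg_right (hsn n) (norm_nonneg _)
      _ = ‖y - z‖ := one_mul _
    have h2 : ‖s n ∘L z - z‖ < ε / 3 := by
      have := hN n hn
      rwa [dist_eq_norm] at this
    have hd : ‖y - z‖ < ε / 3 := by rwa [dist_eq_norm] at hzd
    have heq : s n ∘L y - y = s n ∘L (y - z) + (s n ∘L z - z) + (z - y) := by
      simp only [ContinuousLinearMap.comp_sub]
      abel
    rw [dist_eq_norm, heq]
    calc ‖s n ∘L (y - z) + (s n ∘L z - z) + (z - y)‖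
        ≤ ‖s n ∘L (y - z) + (s n ∘L z - z)‖ + ‖z - y‖ := norm_add_le _ _
      _ ≤ ‖s n ∘L (y - z)‖ + ‖s n ∘L z - z‖ + ‖z - y‖ := by
          exact add_le_add (norm_add_le _ _) le_rfl
      _ < ε / 3 + ε / 3 + ε / 3 := by
          have hzy : ‖z - y‖ < ε / 3 := by rwa [norm_sub_rev]
          have := lt_of_le_of_lt h1 hd
          linarith
      _ = ε := by ring
  refine ⟨fun y hy => by simpa only [hsum] using part1 y hy, ?_⟩
  -- Part 2
  intro r ε hε
  have hev : ∀ᶠ n in atTop, ∀ i ∈ Finset.range r,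
      ‖adjoint (m i) ∘L s n - adjoint (m i)‖ ≤ ε / (r + 1) := by
    rw [Filter.eventually_all_finset]
    intro i _
    have := (key i).eventually (eventually_le_nhds (show (0:ℝ) < ε / (r+1) by positivity))
    exact this
  obtain ⟨N, hN⟩ := Filter.eventually_atTop.mp hev
  refine ⟨N, fun n hn y _ => ?_⟩
  rw [hsum]
  set b : Fin r → (H →L[ℂ] H) := fun i => adjoint (m i) ∘L (s n ∘L y - y) with hb
  have hbi : ∀ i : Fin r, ‖b i‖ ≤ ε / (r + 1) * ‖y‖ := by
    intro i
    have heq : b i = (adjoint (m i) ∘L s n - adjoint (m i)) ∘L y := by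
      rw [hb]
      simp only [ContinuousLinearMap.comp_sub, ContinuousLinearMap.sub_comp,
        ContinuousLinearMap.comp_assoc]
    rw [heq]
    calc ‖(adjoint (m i) ∘L s n - adjoint (m i)) ∘L y‖
        ≤ ‖adjoint (m i) ∘L s n - adjoint (m i)‖ * ‖y‖ :=
          ContinuousLinearMap.opNorm_comp_le _ _
      _ ≤ ε / (r + 1) * ‖y‖ := by
          have := hN n hn i (Finset.mem_range.mpr i.isLt)
          exact mul_le_mul_of_nonneg_right this (norm_nonneg _)
  calc ‖colMap r b‖ ≤ ∑ i, ‖b i‖ := colMap_norm_le r b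
    _ ≤ ∑ _i : Fin r, ε / (r + 1) * ‖y‖ := Finset.sum_le_sum fun i _ => hbi i
    _ = r * (ε / (r + 1) * ‖y‖) := by simp [Finset.sum_const, Finset.card_univ, mul_comm]
    _ ≤ ε * ‖y‖ := by
        rw [← mul_assoc]
        refine mul_le_mul_of_nonneg_right ?_ (norm_nonneg _)
        rw [mul_div_assoc']
        rw [div_le_iff₀ (by positivity)]
        nlinarith [hε.le, Nat.cast_nonneg (α := ℝ) r]
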